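/- Fix γ ∈ (0,1) and let σ : ℝ → ℝ be the leaky-ReLU σ(t) = t for t > 0 and σ(t) = γt for t ≤ 0. For α > 0 define φ_α : ℝ² → ℝ by φ_α(X) = σ(X₁ + X₂) − σ(X₁ + (1+α)X₂). Then: (i) for every Borel probability measure μ on ℝ² that is absolutely continuous with respect to Lebesgue measure, lim_{α → 0⁺} ∫ ‖∇φ_α(X)‖² dμ(X) = 0 (the gradient exists μ-almost everywhere); and (ii) for every α > 0, the Lipschitz constant of φ_α satisfies ‖φ_α‖_Lip² ≥ (1−γ)² + (1+α−γ)², so in particular ‖φ_α‖_Lip does not tend to 0 as α → 0⁺. Hence controlling the expected squared gradient norm under μ does not control the Lipschitz constant. -/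

import Mathlib

open MeasureTheory Filter
open scoped Topology

noncomputable section

/-- Leaky-ReLU with leak coefficient `γ`: `σ(t) = t` for `t > 0` and `γt` for `t ≤ 0`. -/
def lrelu (γ t : ℝ) : ℝ := if 0 < t then t else γ * t

/-- The two-layer network `φ_α(X) = σ(X₁ + X₂) − σ(X₁ + (1+α)X₂)` of the paper's
condition-number counterexample (first-layer weights `[[1,1],[1,1+α]]`). -/
abbrev E2 := EuclideanSpace ℝ (Fin 2)

def phiA (γ a : ℝ) (X : EuclideanSpace ℝ (Fin 2)) : ℝ :=
  lrelu γ (X 0 + X 1) - lrelu γ (X 0 + (1 + a) * X 1)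

/-- The Lipschitz constant `‖f‖_Lip = sup_{x ≠ y} |f x − f y|/‖x − y‖`. -/
def lipConst {E : Type*} [NormedAddCommGroup E] (f : E → ℝ) : ℝ :=
  sSup {r : ℝ | ∃ x y : E, x ≠ y ∧ r = |f x - f y| / ‖x - y‖}



def vec2 (c0 c1 : ℝ) : E2 := (WithLp.equiv 2 (Fin 2 → ℝ)).symm ![c0, c1]

lemma norm_vec2_sq (c0 c1 : ℝ) : ‖vec2 c0 c1‖ ^ 2 = c0 ^ 2 + c1 ^ 2 := by
  rw [EuclideanSpace.norm_eq]
  rw [Real.sq_sqrt (by positivity)]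
  simp [vec2, Fin.sum_univ_two]

lemma hasGradAt_lin (c0 c1 : ℝ) (x : E2) :
    HasGradientAt (fun X : E2 => c0 * X 0 + c1 * X 1) (vec2 c0 c1) x := by
  rw [hasGradientAt_iff_hasFDerivAt]
  have h : (fun X : E2 => c0 * X 0 + c1 * X 1)
      = ⇑(InnerProductSpace.toDual ℝ E2 (vec2 c0 c1)) := by
    funext X
    simp [InnerProductSpace.toDual_apply_apply, PiLp.inner_apply, Fin.sum_univ_two, vec2]
    ring
  rw [h]
  exact (InnerProductSpace.toDual ℝ E2 (vec2 c0 c1)).hasFDerivAt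

lemma cont_lin (c : ℝ) : Continuous (fun Y : E2 => Y 0 + c * Y 1) := by
  have h0 : Continuous (fun Y : E2 => Y 0) :=
    (continuous_apply (0 : Fin 2)).comp (PiLp.continuous_ofLp 2 (fun _ : Fin 2 => ℝ))
  have h1 : Continuous (fun Y : E2 => Y 1) :=
    (continuous_apply (1 : Fin 2)).comp (PiLp.continuous_ofLp 2 (fun _ : Fin 2 => ℝ))
  fun_prop

/-- gradient on a region where `phiA` is linear. -/
lemma grad_of_region (γ a c0 c1 : ℝ) (X : E2) (S : Set E2) (hS : IsOpen S) (hX : X ∈ S)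
    (h : ∀ Y ∈ S, phiA γ a Y = c0 * Y 0 + c1 * Y 1) :
    ‖gradient (phiA γ a) X‖ ^ 2 = c0 ^ 2 + c1 ^ 2 := by
  have hev : phiA γ a =ᶠ[𝓝 X] (fun Y : E2 => c0 * Y 0 + c1 * Y 1) :=
    Filter.eventuallyEq_of_mem (hS.mem_nhds hX) h
  rw [hev.gradient_eq, (hasGradAt_lin c0 c1 X).gradient, norm_vec2_sq]
def wedge (a : ℝ) : Set E2 := {Y : E2 | |Y 0 + Y 1| < a * |Y 1|}

lemma grad_bound {γ a : ℝ} (hγ0 : 0 < γ) (hγ1 : γ < 1) (ha : 0 < a) (ha1 : a ≤ 1)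
    (X : E2) (hu : X 0 + X 1 ≠ 0) (hv : X 0 + (1 + a) * X 1 ≠ 0) :
    ‖gradient (phiA γ a) X‖ ^ 2 ≤ a ^ 2 + 8 * (wedge a).indicator 1 X := by
  have hind : (0:ℝ) ≤ (wedge a).indicator 1 X := Set.indicator_nonneg (fun _ _ => zero_le_one) X
  have hga : 0 < γ * a := mul_pos hγ0 ha
  have hga1 : γ * a ≤ 1 := by nlinarith
  rcases hu.lt_or_gt with hu | hu <;> rcases hv.lt_or_gt with hv | hv
  · -- u < 0, v < 0
    have he : ‖gradient (phiA γ a) X‖ ^ 2 = 0 ^ 2 + (-(γ * a)) ^ 2 := by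
      apply grad_of_region γ a 0 (-(γ*a)) X
        ({Y : E2 | Y 0 + Y 1 < 0} ∩ {Y : E2 | Y 0 + (1+a) * Y 1 < 0})
      · exact (isOpen_lt (by simpa using cont_lin 1) continuous_const).inter
          (isOpen_lt (cont_lin (1+a)) continuous_const)
      · exact ⟨hu, hv⟩
      · rintro Y ⟨h1, h2⟩
        simp only [Set.mem_setOf_eq] at h1 h2
        simp only [phiA, lrelu, if_neg (not_lt.2 h1.le), if_neg (not_lt.2 h2.le)]
        ring
    have h1 : (γ*a)^2 ≤ a^2 := by nlinarith [mul_nonneg (mul_nonneg (sub_nonneg.2 hγ1.le) (by linarith : (0:ℝ) ≤ 1 + γ)) (mul_pos ha ha).le]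
    rw [he]; nlinarith
  · -- u < 0 < v : wedge
    have hmem : X ∈ wedge a := by
      simp only [wedge, Set.mem_setOf_eq]
      have h1 : X 0 + (1+a) * X 1 = (X 0 + X 1) + a * X 1 := by ring
      have hX1 : 0 < a * X 1 := by nlinarith
      rw [abs_of_neg hu, abs_of_pos (by nlinarith : (0:ℝ) < X 1)]
      nlinarith
    have he : ‖gradient (phiA γ a) X‖ ^ 2 = (γ-1) ^ 2 + (γ-1-a) ^ 2 := by
      apply grad_of_region γ a (γ-1) (γ-1-a) X
        ({Y : E2 | Y 0 + Y 1 < 0} ∩ {Y : E2 | 0 < Y 0 + (1+a) * Y 1})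
      · exact (isOpen_lt (by simpa using cont_lin 1) continuous_const).inter
          (isOpen_lt continuous_const (cont_lin (1+a)))
      · exact ⟨hu, hv⟩
      · rintro Y ⟨h1, h2⟩
        simp only [Set.mem_setOf_eq] at h1 h2
        simp only [phiA, lrelu, if_neg (not_lt.2 h1.le), if_pos h2]
        ring
    have hA : (γ-1)^2 ≤ 1 := by nlinarith
    have hB : (γ-1-a)^2 ≤ 4 := by nlinarith
    rw [he, Set.indicator_of_mem hmem]; simp only [Pi.one_apply]; nlinarith [sq_nonneg a]
  · -- v < 0 < u : wedge
    have hmem : X ∈ wedge a := by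
      simp only [wedge, Set.mem_setOf_eq]
      have hX1 : a * X 1 < 0 := by nlinarith
      rw [abs_of_pos hu, abs_of_neg (by nlinarith : X 1 < 0)]
      nlinarith
    have he : ‖gradient (phiA γ a) X‖ ^ 2 = (1-γ) ^ 2 + (1-γ-γ*a) ^ 2 := by
      apply grad_of_region γ a (1-γ) (1-γ-γ*a) X
        ({Y : E2 | 0 < Y 0 + Y 1} ∩ {Y : E2 | Y 0 + (1+a) * Y 1 < 0})
      · exact (isOpen_lt continuous_const (by simpa using cont_lin 1)).inter
          (isOpen_lt (cont_lin (1+a)) continuous_const)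
      · exact ⟨hu, hv⟩
      · rintro Y ⟨h1, h2⟩
        simp only [Set.mem_setOf_eq] at h1 h2
        simp only [phiA, lrelu, if_pos h1, if_neg (not_lt.2 h2.le)]
        ring
    have hA : (1-γ)^2 ≤ 1 := by nlinarith
    have hB : (1-γ-γ*a)^2 ≤ 4 := by nlinarith
    rw [he, Set.indicator_of_mem hmem]; simp only [Pi.one_apply]; nlinarith [sq_nonneg a]
  · -- 0 < u, 0 < v
    have he : ‖gradient (phiA γ a) X‖ ^ 2 = 0 ^ 2 + (-a) ^ 2 := by
      apply grad_of_region γ a 0 (-a) X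
        ({Y : E2 | 0 < Y 0 + Y 1} ∩ {Y : E2 | 0 < Y 0 + (1+a) * Y 1})
      · exact (isOpen_lt continuous_const (by simpa using cont_lin 1)).inter
          (isOpen_lt continuous_const (cont_lin (1+a)))
      · exact ⟨hu, hv⟩
      · rintro Y ⟨h1, h2⟩
        simp only [Set.mem_setOf_eq] at h1 h2
        simp only [phiA, lrelu, if_pos h1, if_pos h2]
        ring
    rw [he]; nlinarith
lemma wedge_meas (a : ℝ) : MeasurableSet (wedge a) := by
  have h1 : Continuous (fun Y : E2 => |Y 0 + Y 1|) := by
    simpa using (cont_lin 1).abs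
  have h2 : Continuous (fun Y : E2 => a * |Y 1|) := by
    have := cont_lin 0  -- not needed
    have h1' : Continuous (fun Y : E2 => Y 1) :=
      (continuous_apply (1 : Fin 2)).comp (PiLp.continuous_ofLp 2 (fun _ : Fin 2 => ℝ))
    exact continuous_const.mul h1'.abs
  exact measurableSet_lt h1.measurable h2.measurable

lemma wedge_mono : Monotone wedge := by
  intro a b hab Y hY
  simp only [wedge, Set.mem_setOf_eq] at *
  calc |Y 0 + Y 1| < a * |Y 1| := hY
    _ ≤ b * |Y 1| := mul_le_mul_of_nonneg_right hab (abs_nonneg _)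

lemma grad_meas (γ a : ℝ) : Measurable (fun X : E2 => ‖gradient (phiA γ a) X‖ ^ 2) := by
  have h : Measurable (fun X : E2 => gradient (phiA γ a) X) :=
    (InnerProductSpace.toDual ℝ E2).symm.continuous.measurable.comp
      (measurable_fderiv ℝ (phiA γ a))
  exact h.norm.pow_const 2

lemma line_null (μ : Measure E2) (hac : μ ≪ volume) (c : ℝ) :
    μ {X : E2 | X 0 + c * X 1 = 0} = 0 := by
  set L : E2 →ₗ[ℝ] ℝ := EuclideanSpace.projₗ 0 + c • EuclideanSpace.projₗ 1 with hL
  have hset : {X : E2 | X 0 + c * X 1 = 0} = (LinearMap.ker L : Set E2) := by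
    ext X
    simp [hL, LinearMap.mem_ker]
  have hne : LinearMap.ker L ≠ ⊤ := by
    intro h
    have h1 : L (EuclideanSpace.single 0 1) = 0 := by
      rw [← LinearMap.mem_ker, h]; trivial
    simp [hL, EuclideanSpace.single_apply] at h1
  rw [hset]
  exact hac (MeasureTheory.Measure.addHaar_submodule volume _ hne)
lemma wedge_toReal_tendsto (μ : Measure E2) [IsProbabilityMeasure μ] (hac : μ ≪ volume) :
    Tendsto (fun a : ℝ => (μ (wedge a)).toReal) (𝓝[>] (0:ℝ)) (𝓝 0) := by
  have hB : Tendsto (fun n : ℕ => μ (wedge (1/(n+1)))) atTop (𝓝 (μ (⋂ n : ℕ, wedge (1/(n+1))))) := by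
    apply tendsto_measure_iInter_atTop
    · exact fun n => (wedge_meas _).nullMeasurableSet
    · intro n m hnm
      apply wedge_mono
      have h1 : (0:ℝ) < (n:ℝ) + 1 := by positivity
      have h2 : (0:ℝ) < (m:ℝ) + 1 := by positivity
      rw [div_le_div_iff₀ h2 h1]
      have : (n:ℝ) ≤ m := Nat.cast_le.2 hnm
      linarith
    · exact ⟨0, measure_ne_top μ _⟩
  have hI : μ (⋂ n : ℕ, wedge (1/(n+1))) = 0 := by
    have hsub : (⋂ n : ℕ, wedge (1/(n+1))) ⊆ {X : E2 | X 0 + 1 * X 1 = 0} := by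
      intro Y hY
      simp only [Set.mem_iInter] at hY
      simp only [Set.mem_setOf_eq, one_mul]
      by_contra hne
      have habs : 0 < |Y 0 + Y 1| := abs_pos.2 hne
      obtain ⟨n, hn⟩ := exists_nat_gt (|Y 1| / |Y 0 + Y 1|)
      have := hY n
      simp only [wedge, Set.mem_setOf_eq] at this
      have h1 : (0:ℝ) < (n:ℝ) + 1 := by positivity
      rw [div_lt_iff₀ habs] at hn
      rw [div_mul_eq_mul_div, lt_div_iff₀ h1, one_mul] at this
      nlinarith [abs_nonneg (Y 1)]
    exact measure_mono_null hsub (line_null μ hac 1)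
  rw [hI] at hB
  have hBr : Tendsto (fun n : ℕ => (μ (wedge (1/(n+1)))).toReal) atTop (𝓝 0) := by
    have := (ENNReal.tendsto_toReal ENNReal.zero_ne_top).comp hB
    simpa [Function.comp_def] using this
  rw [Metric.tendsto_nhdsWithin_nhds]
  intro ε hε
  rw [Metric.tendsto_atTop] at hBr
  obtain ⟨n, hn⟩ := hBr ε hε
  refine ⟨1/(n+1), by positivity, ?_⟩
  intro x hx hdx
  have hxlt : x < 1/(n+1) := by
    rw [Real.dist_eq, sub_zero, abs_of_pos hx] at hdx
    exact hdx
  have hmono : (μ (wedge x)).toReal ≤ (μ (wedge (1/(n+1)))).toReal :=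
    ENNReal.toReal_mono (measure_ne_top μ _) (measure_mono (wedge_mono hxlt.le))
  have hlast := hn n le_rfl
  rw [Real.dist_eq] at hlast ⊢
  rw [sub_zero] at hlast ⊢
  rw [abs_of_nonneg ENNReal.toReal_nonneg] at hlast ⊢
  exact lt_of_le_of_lt hmono hlast

lemma partI {γ : ℝ} (hγ0 : 0 < γ) (hγ1 : γ < 1)
    (μ : Measure E2) [IsProbabilityMeasure μ] (hac : μ ≪ volume) :
    Tendsto (fun a : ℝ => ∫ X, ‖gradient (phiA γ a) X‖ ^ 2 ∂μ) (𝓝[>] (0:ℝ)) (𝓝 0) := by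
  have key : ∀ a : ℝ, 0 < a → a ≤ 1 →
      ∫ X, ‖gradient (phiA γ a) X‖ ^ 2 ∂μ ≤ a ^ 2 + 8 * (μ (wedge a)).toReal := by
    intro a ha ha1
    have hu_ae : ∀ᵐ X ∂μ, X 0 + X 1 ≠ 0 := by
      rw [ae_iff]
      have := line_null μ hac 1
      simp only [one_mul] at this
      simpa using this
    have hv_ae : ∀ᵐ X ∂μ, X 0 + (1 + a) * X 1 ≠ 0 := by
      rw [ae_iff]
      have := line_null μ hac (1 + a)
      simpa using this
    have hae : ∀ᵐ X ∂μ, ‖gradient (phiA γ a) X‖ ^ 2 ≤ a ^ 2 + 8 * (wedge a).indicator 1 X := by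
      filter_upwards [hu_ae, hv_ae] with X hu hv
      exact grad_bound hγ0 hγ1 ha ha1 X hu hv
    have hInt2 : Integrable (fun X : E2 => a ^ 2 + 8 * (wedge a).indicator 1 X) μ := by
      apply (integrable_const (a^2)).add
      exact (((integrable_const (1:ℝ)).indicator (wedge_meas a)).const_mul 8)
    have hInt1 : Integrable (fun X : E2 => ‖gradient (phiA γ a) X‖ ^ 2) μ := by
      apply Integrable.mono' hInt2 (grad_meas γ a).aestronglyMeasurable
      filter_upwards [hae] with X hX
      rwa [Real.norm_eq_abs, abs_of_nonneg (by positivity)]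
    calc ∫ X, ‖gradient (phiA γ a) X‖ ^ 2 ∂μ
        ≤ ∫ X, (a ^ 2 + 8 * (wedge a).indicator 1 X) ∂μ := integral_mono_ae hInt1 hInt2 hae
      _ = a ^ 2 + 8 * (μ (wedge a)).toReal := by
          have hInt8 : Integrable (fun X : E2 => 8 * (wedge a).indicator (1 : E2 → ℝ) X) μ :=
            Integrable.const_mul ((integrable_const (1:ℝ)).indicator (wedge_meas a)) 8
          have hind_int : ∫ X, (wedge a).indicator (1 : E2 → ℝ) X ∂μ = (μ (wedge a)).toReal := by
            have h := integral_indicator_const (X := E2) (μ := μ) (1:ℝ) (wedge_meas a)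
            convert h using 1
            · rfl
            · simp [Measure.real]
          rw [integral_add (integrable_const _) hInt8, integral_const, integral_const_mul,
            hind_int]
          simp
  have hup : Tendsto (fun a : ℝ => a ^ 2 + 8 * (μ (wedge a)).toReal) (𝓝[>] (0:ℝ)) (𝓝 0) := by
    have h1 : Tendsto (fun a : ℝ => a ^ 2) (𝓝[>] (0:ℝ)) (𝓝 0) := by
      have h := ((continuous_pow 2).tendsto (0:ℝ)).mono_left
        (nhdsWithin_le_nhds (s := Set.Ioi (0:ℝ)))
      simpa using h
    have h2 := (wedge_toReal_tendsto μ hac).const_mul (8:ℝ)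
    have := h1.add h2
    simpa using this
  apply tendsto_of_tendsto_of_tendsto_of_le_of_le' tendsto_const_nhds hup
  · filter_upwards with a
    exact integral_nonneg (fun X => by positivity)
  · filter_upwards [Ioc_mem_nhdsGT_of_mem (by simp : (0:ℝ) ∈ Set.Ico (0:ℝ) 1)] with a ha
    exact key a ha.1 ha.2
lemma vec2_apply0 (c0 c1 : ℝ) : vec2 c0 c1 0 = c0 := rfl
lemma vec2_apply1 (c0 c1 : ℝ) : vec2 c0 c1 1 = c1 := rfl

lemma lrelu_lip {γ : ℝ} (hγ0 : 0 < γ) (hγ1 : γ < 1) (s t : ℝ) :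
    |lrelu γ s - lrelu γ t| ≤ |s - t| := by
  simp only [lrelu]
  split_ifs with h1 h2 h2 <;> rw [abs_le] <;> constructor <;>
    nlinarith [le_abs_self (s - t), neg_abs_le (s - t)]

lemma coord_le (z : E2) (i : Fin 2) : |z i| ≤ ‖z‖ := by
  rw [EuclideanSpace.norm_eq]
  rw [show |z i| = Real.sqrt (|z i| ^ 2) by rw [Real.sqrt_sq_eq_abs, abs_abs]]
  apply Real.sqrt_le_sqrt
  fin_cases i <;> simp [Fin.sum_univ_two, sq_abs] <;> nlinarith [sq_nonneg (z 0), sq_nonneg (z 1)]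

lemma lip_bdd {γ a : ℝ} (hγ0 : 0 < γ) (hγ1 : γ < 1) (ha : 0 < a) :
    BddAbove {r : ℝ | ∃ x y : E2, x ≠ y ∧ r = |phiA γ a x - phiA γ a y| / ‖x - y‖} := by
  refine ⟨4 + a, ?_⟩
  rintro r ⟨x, y, hxy, rfl⟩
  have hnorm : 0 < ‖x - y‖ := by
    rw [norm_pos_iff, sub_ne_zero]; exact hxy
  rw [div_le_iff₀ hnorm]
  have h0 : |x 0 - y 0| ≤ ‖x - y‖ := by
    have := coord_le (x - y) 0
    simpa using this
  have h1 : |x 1 - y 1| ≤ ‖x - y‖ := by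
    have := coord_le (x - y) 1
    simpa using this
  have hu := lrelu_lip hγ0 hγ1 (x 0 + x 1) (y 0 + y 1)
  have hv := lrelu_lip hγ0 hγ1 (x 0 + (1 + a) * x 1) (y 0 + (1 + a) * y 1)
  have hu2 : |x 0 + x 1 - (y 0 + y 1)| ≤ 2 * ‖x - y‖ := by
    calc |x 0 + x 1 - (y 0 + y 1)| = |(x 0 - y 0) + (x 1 - y 1)| := by ring_nf
      _ ≤ |x 0 - y 0| + |x 1 - y 1| := abs_add_le _ _
      _ ≤ 2 * ‖x - y‖ := by linarith
  have hv2 : |x 0 + (1 + a) * x 1 - (y 0 + (1 + a) * y 1)| ≤ (2 + a) * ‖x - y‖ := by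
    calc |x 0 + (1 + a) * x 1 - (y 0 + (1 + a) * y 1)|
        = |(x 0 - y 0) + (1 + a) * (x 1 - y 1)| := by ring_nf
      _ ≤ |x 0 - y 0| + |(1 + a) * (x 1 - y 1)| := abs_add_le _ _
      _ = |x 0 - y 0| + (1 + a) * |x 1 - y 1| := by
          rw [abs_mul, abs_of_pos (by linarith : (0:ℝ) < 1 + a)]
      _ ≤ (2 + a) * ‖x - y‖ := by nlinarith
  calc |phiA γ a x - phiA γ a y|
      = |(lrelu γ (x 0 + x 1) - lrelu γ (y 0 + y 1))
          - (lrelu γ (x 0 + (1 + a) * x 1) - lrelu γ (y 0 + (1 + a) * y 1))| := by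
        simp only [phiA]; ring_nf
    _ ≤ |lrelu γ (x 0 + x 1) - lrelu γ (y 0 + y 1)|
          + |lrelu γ (x 0 + (1 + a) * x 1) - lrelu γ (y 0 + (1 + a) * y 1)| := abs_sub _ _
    _ ≤ |x 0 + x 1 - (y 0 + y 1)| + |x 0 + (1 + a) * x 1 - (y 0 + (1 + a) * y 1)| := by
        linarith
    _ ≤ (4 + a) * ‖x - y‖ := by linarith

lemma gnorm_le_lip {γ a : ℝ} (hγ0 : 0 < γ) (hγ1 : γ < 1) (ha : 0 < a) :
    ‖vec2 (γ - 1) (γ - 1 - a)‖ ≤ lipConst (phiA γ a) := by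
  set g : E2 := vec2 (γ - 1) (γ - 1 - a) with hg
  set c : ℝ := (γ - 1) + (1 + a) * (γ - 1 - a) with hcdef
  have hc : c < 0 := by nlinarith
  set t : ℝ := a / (4 * (-c)) with htdef
  have ht : 0 < t := div_pos ha (by linarith)
  have h4c : (0:ℝ) < 4 * -c := by linarith
  have htc : t * c = -(a / 4) := by
    rw [htdef, div_mul_eq_mul_div, div_eq_iff (ne_of_gt h4c)]
    ring
  set X₀ : E2 := vec2 (-1 - a/2) 1 with hX
  set Y : E2 := X₀ + t • g with hY
  have hY0 : Y 0 = (-1 - a/2) + t * (γ - 1) := by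
    simp [hY, hX, hg, vec2_apply0]
  have hY1 : Y 1 = 1 + t * (γ - 1 - a) := by
    simp [hY, hX, hg, vec2_apply1]
  have hlin : ∀ Z : E2, Z 0 + Z 1 < 0 → 0 < Z 0 + (1 + a) * Z 1 →
      phiA γ a Z = (γ - 1) * Z 0 + (γ - 1 - a) * Z 1 := by
    intro Z h1 h2
    simp only [phiA, lrelu, if_neg (not_lt.2 h1.le), if_pos h2]
    ring
  have hX0u : X₀ 0 + X₀ 1 < 0 := by
    rw [hX, vec2_apply0, vec2_apply1]; linarith
  have hX0v : 0 < X₀ 0 + (1 + a) * X₀ 1 := by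
    rw [hX, vec2_apply0, vec2_apply1]; linarith
  have hYu : Y 0 + Y 1 < 0 := by
    rw [hY0, hY1]; nlinarith
  have hYv : 0 < Y 0 + (1 + a) * Y 1 := by
    rw [hY0, hY1]
    have : (-1 - a/2) + t * (γ - 1) + (1 + a) * (1 + t * (γ - 1 - a)) = a/2 + t * c := by
      rw [hcdef]; ring
    rw [this, htc]; linarith
  have hgsq : ‖g‖ ^ 2 = (γ - 1) ^ 2 + (γ - 1 - a) ^ 2 := norm_vec2_sq _ _
  have hdiff : phiA γ a X₀ - phiA γ a Y = -(t * ‖g‖ ^ 2) := by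
    rw [hlin X₀ hX0u hX0v, hlin Y hYu hYv, hY0, hY1, hX, vec2_apply0, vec2_apply1, hgsq]
    ring
  have hgpos : 0 < ‖g‖ := by
    rw [norm_pos_iff]
    intro h
    have h0 : g 0 = 0 := by rw [h]; rfl
    rw [hg, vec2_apply0] at h0
    linarith
  have hsub : X₀ - Y = -(t • g) := by rw [hY]; abel
  have hxynorm : ‖X₀ - Y‖ = t * ‖g‖ := by
    rw [hsub, norm_neg, norm_smul, Real.norm_eq_abs, abs_of_pos ht]
  have hne : X₀ ≠ Y := by
    intro h
    rw [h, sub_self] at hsub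
    have : ‖X₀ - Y‖ = 0 := by rw [h, sub_self, norm_zero]
    rw [hxynorm] at this
    nlinarith
  have hr : ‖g‖ = |phiA γ a X₀ - phiA γ a Y| / ‖X₀ - Y‖ := by
    rw [hdiff, hxynorm, abs_neg, abs_of_pos (by positivity : 0 < t * ‖g‖ ^ 2)]
    field_simp
  exact le_csSup (lip_bdd hγ0 hγ1 ha) ⟨X₀, Y, hne, hr⟩

/-- For the network `φ_α` above (whose first-layer condition number
blows up as `α → 0⁺`): (i) for every absolutely continuous probability measure `μ` on
`ℝ²`, the expected squared gradient norm `∫ ‖∇φ_α‖² dμ` tends to `0` as `α → 0⁺`, yet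
(ii) `‖φ_α‖²_Lip ≥ (1−γ)² + (1+α−γ)²` for every `α > 0`, so `‖φ_α‖_Lip` does not tend to
`0`: the expected gradient norm does not control the Lipschitz constant. -/
theorem expected_gradient_does_not_control_lipschitz
    (γ : ℝ) (hγ : γ ∈ Set.Ioo (0 : ℝ) 1) :
    (∀ μ : Measure (EuclideanSpace ℝ (Fin 2)), IsProbabilityMeasure μ → μ ≪ volume →
      Tendsto (fun a : ℝ => ∫ X, ‖gradient (phiA γ a) X‖ ^ 2 ∂μ)
        (𝓝[>] (0 : ℝ)) (𝓝 0)) ∧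
    (∀ a : ℝ, 0 < a →
      (1 - γ) ^ 2 + (1 + a - γ) ^ 2 ≤ (lipConst (phiA γ a)) ^ 2) ∧
    ¬ Tendsto (fun a : ℝ => lipConst (phiA γ a)) (𝓝[>] (0 : ℝ)) (𝓝 0) := by
  obtain ⟨hγ0, hγ1⟩ := hγ
  refine ⟨?_, ?_, ?_⟩
  · intro μ hprob hac
    haveI := hprob
    exact partI hγ0 hγ1 μ hac
  · intro a ha
    have h := gnorm_le_lip hγ0 hγ1 ha
    have h2 : ‖vec2 (γ - 1) (γ - 1 - a)‖ ^ 2 ≤ (lipConst (phiA γ a)) ^ 2 :=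
      pow_le_pow_left₀ (norm_nonneg _) h 2
    rw [norm_vec2_sq] at h2
    have heq : (1 - γ) ^ 2 + (1 + a - γ) ^ 2 = (γ - 1) ^ 2 + (γ - 1 - a) ^ 2 := by ring
    linarith
  · intro h
    have hev1 : ∀ᶠ a in 𝓝[>] (0:ℝ), lipConst (phiA γ a) < 1 - γ :=
      h.eventually_lt_const (by linarith : (0:ℝ) < 1 - γ)
    have hev2 : ∀ᶠ a in 𝓝[>] (0:ℝ), a ∈ Set.Ioi (0:ℝ) := self_mem_nhdsWithin
    obtain ⟨a, hlt, ha⟩ := (hev1.and hev2).exists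
    have hlb := gnorm_le_lip hγ0 hγ1 ha
    have hgsq := norm_vec2_sq (γ - 1) (γ - 1 - a)
    have hge : 1 - γ ≤ ‖vec2 (γ - 1) (γ - 1 - a)‖ := by
      nlinarith [norm_nonneg (vec2 (γ - 1) (γ - 1 - a)), sq_nonneg (γ - 1 - a)]
    linarith

end
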